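/- Abstract form of Theorem 3 (linear speedup with limited coherence): Let H be a finite type, let p : H → ℝ be nonnegative with ∑_h p h = 1, let J : H → ℕ, let α_o ≥ 1 be real, let k ≥ 1 be a natural number, and let Q : H → ℕ → ℝ satisfy 0 < Q h j ≤ 1 and arcsin(√(Q h j)) ≤ π/(2(2k+1)) for all h and all j < J h. Define T_q h = ∑_{j < J h} (α_o·k + 1)/sin²((2k+1)·arcsin(√(Q h j))) and T_c h = ∑_{j < J h} 1/(Q h j). Then ∑_h p h · T_q h ≤ (α_o·π²/(16·k)) · ∑_h p h · T_c h; i.e., ⟨T⟩_q ≤ (α_o·π²/(16·k_max))·⟨T⟩_c. -/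

import Mathlib

open Real Finset

/-- Abstract form of Theorem 3 (linear speedup with limited coherence):
with at most `k = k_max` coherent Grover iterations, the average hybrid
learning time obeys `⟨T⟩_q ≤ (α_o·π²/(16·k_max))·⟨T⟩_c`. -/
theorem hybrid_linear_speedup_limited_coherence (H : Type*) [Fintype H]
    (p : H → ℝ) (hp : ∀ h, 0 ≤ p h) (hpsum : ∑ h : H, p h = 1)
    (J : H → ℕ) (αo : ℝ) (hαo : 1 ≤ αo) (k : ℕ) (hk : 1 ≤ k)
    (Q : H → ℕ → ℝ)
    (hQ0 : ∀ h, ∀ j < J h, 0 < Q h j) (hQ1 : ∀ h, ∀ j < J h, Q h j ≤ 1)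
    (hsat : ∀ h, ∀ j < J h,
      Real.arcsin (Real.sqrt (Q h j)) ≤ Real.pi / (2 * (2 * k + 1)))
    (Tq : H → ℝ)
    (hTq : ∀ h, Tq h = ∑ j ∈ Finset.range (J h),
      (αo * k + 1) /
        Real.sin ((2 * k + 1) * Real.arcsin (Real.sqrt (Q h j))) ^ 2)
    (Tc : H → ℝ)
    (hTc : ∀ h, Tc h = ∑ j ∈ Finset.range (J h), 1 / Q h j) :
    ∑ h : H, p h * Tq h ≤
      αo * Real.pi ^ 2 / (16 * k) * ∑ h : H, p h * Tc h := by
  set C : ℝ := αo * Real.pi ^ 2 / (16 * k) with hC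
  have hk' : (1 : ℝ) ≤ (k : ℝ) := by exact_mod_cast hk
  have hπ := Real.pi_pos
  have key : ∀ h, Tq h ≤ C * Tc h := by
    intro h
    rw [hTq, hTc, Finset.mul_sum]
    refine Finset.sum_le_sum ?_
    intro j hj
    rw [Finset.mem_range] at hj
    have hQpos := hQ0 h j hj
    have hQle := hQ1 h j hj
    have hs : Real.arcsin (Real.sqrt (Q h j)) ≤ Real.pi / (2 * (2 * k + 1)) :=
      hsat h j hj
    set θ := Real.arcsin (Real.sqrt (Q h j)) with hθ
    have hsq0 : 0 < Real.sqrt (Q h j) := Real.sqrt_pos.2 hQpos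
    have hsq1 : Real.sqrt (Q h j) ≤ 1 := by
      rw [show (1:ℝ) = Real.sqrt 1 by simp]
      exact Real.sqrt_le_sqrt hQle
    have hθ0 : 0 < θ := Real.arcsin_pos.2 hsq0
    -- √Q ≤ θ
    have hsθ : Real.sqrt (Q h j) ≤ θ := by
      have := Real.sin_le hθ0.le
      rwa [hθ, Real.sin_arcsin (by linarith) hsq1] at this
    set x : ℝ := (2 * k + 1) * θ with hx
    have hx0 : 0 < x := by positivity
    have hxle : x ≤ Real.pi / 2 := by
      rw [hx]
      have h2k : (0:ℝ) < 2 * k + 1 := by positivity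
      calc (2 * (k:ℝ) + 1) * θ ≤ (2 * k + 1) * (Real.pi / (2 * (2 * k + 1))) :=
            by nlinarith
        _ = Real.pi / 2 := by field_simp
    have hsin : 2 / Real.pi * x ≤ Real.sin x := Real.mul_le_sin hx0.le hxle
    have hsinpos : 0 < Real.sin x := lt_of_lt_of_le (by positivity) hsin
    -- sin²x ≥ (2/π)²(2k+1)² Q
    have hlow : (2 / Real.pi) ^ 2 * (2 * k + 1) ^ 2 * Q h j ≤ Real.sin x ^ 2 := by
      have h1 : 2 / Real.pi * ((2 * k + 1) * Real.sqrt (Q h j)) ≤ Real.sin x := by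
        refine le_trans ?_ hsin
        have h2k : (0:ℝ) < 2 * k + 1 := by positivity
        rw [hx]
        gcongr
      have h2 : (0:ℝ) ≤ 2 / Real.pi * ((2 * k + 1) * Real.sqrt (Q h j)) := by positivity
      have := mul_self_le_mul_self h2 h1
      have hsq : Real.sqrt (Q h j) * Real.sqrt (Q h j) = Q h j :=
        Real.mul_self_sqrt hQpos.le
      nlinarith
    have hsinsq : 0 < Real.sin x ^ 2 := by positivity
    have hlowpos : 0 < (2 / Real.pi) ^ 2 * (2 * k + 1) ^ 2 * Q h j := by positivity
    -- term bound
    have hnum : 0 < αo * k + 1 := by positivity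
    have step1 : (αo * k + 1) / Real.sin x ^ 2 ≤
        (αo * k + 1) / ((2 / Real.pi) ^ 2 * (2 * k + 1) ^ 2 * Q h j) :=
      div_le_div_of_nonneg_left hnum.le hlowpos hlow
    refine step1.trans ?_
    rw [div_le_iff₀ hlowpos, hC]
    have hkpos : (0:ℝ) < k := by linarith
    rw [show αo * Real.pi ^ 2 / (16 * ↑k) * (1 / Q h j) *
        ((2 / Real.pi) ^ 2 * (2 * ↑k + 1) ^ 2 * Q h j)
        = αo * (2 * k + 1) ^ 2 / (4 * k) by field_simp; ring]
    rw [le_div_iff₀ (by positivity : (0:ℝ) < 4 * k)]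
    have hka : (k:ℝ) ≤ αo * k := le_mul_of_one_le_left hkpos.le hαo
    nlinarith [hka, hkpos]
  calc ∑ h : H, p h * Tq h ≤ ∑ h : H, p h * (C * Tc h) :=
        Finset.sum_le_sum fun h _ => mul_le_mul_of_nonneg_left (key h) (hp h)
    _ = C * ∑ h : H, p h * Tc h := by rw [Finset.mul_sum]; congr 1; ext h; ring
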